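/- (Injectivity of the exponential map) The matrix exponential is injective on the set of real skew-symmetric n×n matrices Ω with ‖Ω‖₂ < π: if Ω₁, Ω₂ are skew-symmetric with ‖Ω₁‖₂ < π, ‖Ω₂‖₂ < π and exp(Ω₁) = exp(Ω₂), then Ω₁ = Ω₂. -/

import Mathlib

open Matrix

noncomputable section

/-- Matrix exponential of a real square matrix. -/
def mexp {n : ℕ} (A : Matrix (Fin n) (Fin n) ℝ) : Matrix (Fin n) (Fin n) ℝ :=
  NormedSpace.exp A

/-- Skew-symmetric part: `skew M = (M - Mᵀ)/2`. -/
def skewPart {n : ℕ} (M : Matrix (Fin n) (Fin n) ℝ) : Matrix (Fin n) (Fin n) ℝ :=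
  (1 / 2 : ℝ) • (M - Mᵀ)

/-- Frobenius norm of a real square matrix. -/
def frobNorm {n : ℕ} (A : Matrix (Fin n) (Fin n) ℝ) : ℝ :=
  Real.sqrt (∑ i, ∑ j, (A i j) ^ 2)

/-- The singular values of `A`: square roots of the eigenvalues of `AᴴA = AᵀA`. -/
def singVals {n : ℕ} (A : Matrix (Fin n) (Fin n) ℝ) : Fin n → ℝ :=
  fun i => Real.sqrt ((show (Aᵀ * A).IsHermitian by
    simpa [conjTranspose_eq_transpose_of_trivial] using
      Matrix.isHermitian_conjTranspose_mul_self A).eigenvalues i)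

/-- Largest singular value of `A`. -/
def sigmaMax {n : ℕ} (A : Matrix (Fin n) (Fin n) ℝ) : ℝ := ⨆ i, singVals A i

/-- Smallest singular value of `A`. -/
def sigmaMin {n : ℕ} (A : Matrix (Fin n) (Fin n) ℝ) : ℝ := ⨅ i, singVals A i

/-- Spectral norm (largest singular value) of `A`. -/
def specNorm {n : ℕ} (A : Matrix (Fin n) (Fin n) ℝ) : ℝ := sigmaMax A

/-- Riemannian distance on a connected component of `O(n)`:
`dist(X,Y) = min { ‖Ω‖_F : Ω skew-symmetric, X·exp(Ω) = Y }`. -/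
def Odist {n : ℕ} (X Y : Matrix (Fin n) (Fin n) ℝ) : ℝ :=
  sInf {d : ℝ | ∃ Ω : Matrix (Fin n) (Fin n) ℝ, Ωᵀ = -Ω ∧ X * mexp Ω = Y ∧ d = frobNorm Ω}

end

section aux

/-- Entrywise complexification commutes with the matrix exponential. -/
lemma map_exp_matrix {n : ℕ} (M : Matrix (Fin n) (Fin n) ℝ) :
    (NormedSpace.exp M).map Complex.ofReal
      = NormedSpace.exp (M.map Complex.ofReal) := by
  letI : SeminormedRing (Matrix (Fin n) (Fin n) ℝ) := Matrix.linftyOpSemiNormedRing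
  letI : NormedRing (Matrix (Fin n) (Fin n) ℝ) := Matrix.linftyOpNormedRing
  letI : NormedAlgebra ℝ (Matrix (Fin n) (Fin n) ℝ) := Matrix.linftyOpNormedAlgebra
  letI : NormedAlgebra ℚ (Matrix (Fin n) (Fin n) ℝ) := NormedAlgebra.restrictScalars ℚ ℝ _
  letI : SeminormedRing (Matrix (Fin n) (Fin n) ℂ) := Matrix.linftyOpSemiNormedRing
  letI : NormedRing (Matrix (Fin n) (Fin n) ℂ) := Matrix.linftyOpNormedRing
  letI : NormedAlgebra ℝ (Matrix (Fin n) (Fin n) ℂ) := Matrix.linftyOpNormedAlgebra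
  have hc : Continuous (Complex.ofRealHom.mapMatrix :
      Matrix (Fin n) (Fin n) ℝ →+* Matrix (Fin n) (Fin n) ℂ) := by
    apply continuous_matrix
    intro i j
    exact Complex.continuous_ofReal.comp ((continuous_apply j).comp (continuous_apply i))
  exact NormedSpace.map_exp (Complex.ofRealHom.mapMatrix) hc M

/-- `i·Ω` is Hermitian for a real skew-symmetric `Ω`. -/
lemma isHermitian_I_smul {n : ℕ} {Ω : Matrix (Fin n) (Fin n) ℝ} (h : Ωᵀ = -Ω) :
    (Complex.I • Ω.map Complex.ofReal).IsHermitian := by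
  ext i j
  have hji : Ω j i = -Ω i j := by
    have := congrFun (congrFun h i) j
    simpa [Matrix.transpose_apply] using this
  simp [Matrix.conjTranspose_apply, Matrix.map_apply, hji, Complex.ext_iff]

/-- Strict Rayleigh quotient bound from a strict bound on all eigenvalues. -/
lemma rayleigh_lt {n : ℕ} {S : Matrix (Fin n) (Fin n) ℝ} (hS : S.IsHermitian) {c : ℝ}
    (hev : ∀ i, hS.eigenvalues i < c) (w : Fin n → ℝ) (hw : w ≠ 0) :
    w ⬝ᵥ (S *ᵥ w) < c * (w ⬝ᵥ w) := by
  classical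
  set W : Matrix (Fin n) (Fin n) ℝ := (hS.eigenvectorUnitary : Matrix (Fin n) (Fin n) ℝ) with hW
  have hWs : W * star W = 1 := (Matrix.mem_unitaryGroup_iff).mp (hS.eigenvectorUnitary).2
  have hWs' : star W * W = 1 := (Matrix.mem_unitaryGroup_iff').mp (hS.eigenvectorUnitary).2
  set u : Fin n → ℝ := (star W) *ᵥ w with hu
  have hWu : W *ᵥ u = w := by
    rw [hu, Matrix.mulVec_mulVec, hWs, Matrix.one_mulVec]
  have hune : u ≠ 0 := by
    intro h0
    apply hw
    rw [← hWu, h0, Matrix.mulVec_zero]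
  have hvecMul : ∀ z : Fin n → ℝ, (W *ᵥ z) ᵥ* W = z := by
    intro z
    rw [← Matrix.mulVec_transpose, ← Matrix.conjTranspose_eq_transpose_of_trivial,
      Matrix.mulVec_mulVec]
    show (star W * W) *ᵥ z = z
    rw [hWs', Matrix.one_mulVec]
  have key : w ⬝ᵥ (S *ᵥ w) = ∑ i, hS.eigenvalues i * (u i) ^ 2 := by
    conv_lhs => rw [hS.spectral_theorem, Unitary.conjStarAlgAut_apply, ← hW]
    rw [Matrix.mul_assoc, ← Matrix.mulVec_mulVec, ← Matrix.mulVec_mulVec, ← hu, ← hWu,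
      Matrix.dotProduct_mulVec (W *ᵥ u) W _, hvecMul]
    simp [dotProduct, Matrix.mulVec_diagonal, RCLike.ofReal_real_eq_id]
    exact Finset.sum_congr rfl fun i _ => by ring
  have hnorm : w ⬝ᵥ w = ∑ i, (u i) ^ 2 := by
    conv_lhs => rw [← hWu]
    rw [Matrix.dotProduct_mulVec (W *ᵥ u) W _, hvecMul]
    simp [dotProduct, pow_two]
  rw [key, hnorm, Finset.mul_sum]
  obtain ⟨i0, hi0⟩ : ∃ i, u i ≠ 0 := by
    by_contra h0
    push_neg at h0
    exact hune (funext h0)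
  refine Finset.sum_lt_sum (fun i _ => mul_le_mul_of_nonneg_right (hev i).le (sq_nonneg _))
    ⟨i0, Finset.mem_univ _, ?_⟩
  exact mul_lt_mul_of_pos_right (hev i0) (by positivity)

/-- Eigenvalues of `i·Ω` are bounded by `π` when all eigenvalues of `ΩᵀΩ` are less than `π²`. -/
lemma eig_abs_lt {n : ℕ} {Ω : Matrix (Fin n) (Fin n) ℝ} (hsk : Ωᵀ = -Ω)
    (hev : ∀ i, (Matrix.isHermitian_conjTranspose_mul_self Ω).eigenvalues i < Real.pi ^ 2)
    (hA : (Complex.I • Ω.map Complex.ofReal).IsHermitian) (k : Fin n) :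
    |hA.eigenvalues k| < Real.pi := by
  classical
  set A : Matrix (Fin n) (Fin n) ℂ := Complex.I • Ω.map Complex.ofReal with hAdef
  set S : Matrix (Fin n) (Fin n) ℝ := Ωᴴ * Ω with hSdef
  have hS := Matrix.isHermitian_conjTranspose_mul_self Ω
  set lam : ℝ := hA.eigenvalues k with hlam
  set v : Fin n → ℂ := ⇑(hA.eigenvectorBasis k) with hv
  have hv0 : v ≠ 0 := by
    intro h0
    apply hA.eigenvectorBasis.orthonormal.ne_zero k
    ext i
    exact congrFun h0 i
  have hAv : A *ᵥ v = lam • v := hA.mulVec_eigenvectorBasis k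
  have hAA : A * A = S.map Complex.ofReal := by
    ext i j
    have hji : ∀ l, Ω l i = -Ω i l := fun l => by
      have := congrFun (congrFun hsk i) l; simpa using this
    simp [hAdef, hSdef, Matrix.mul_apply, Matrix.map_apply, Matrix.smul_apply,
      Matrix.conjTranspose_apply, hji, Finset.sum_neg_distrib]
    rw [← Finset.sum_neg_distrib]
    refine Finset.sum_congr rfl fun l _ => by
      linear_combination (↑(Ω i l) * ↑(Ω l j) : ℂ) * Complex.I_mul_I
  have hSv : (S.map Complex.ofReal) *ᵥ v = (lam ^ 2) • v := by
    rw [← hAA, ← Matrix.mulVec_mulVec, hAv, Matrix.mulVec_smul, hAv, smul_smul, ← sq]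
  have hre : S *ᵥ (fun i => (v i).re) = (lam ^ 2) • (fun i => (v i).re) := by
    funext i
    have h2 := congrArg Complex.re (congrFun hSv i)
    simpa [Matrix.mulVec, dotProduct, Matrix.map_apply, Complex.re_sum,
      Pi.smul_apply, Complex.smul_re, ← Complex.ofReal_pow] using h2
  have him : S *ᵥ (fun i => (v i).im) = (lam ^ 2) • (fun i => (v i).im) := by
    funext i
    have h2 := congrArg Complex.im (congrFun hSv i)
    simpa [Matrix.mulVec, dotProduct, Matrix.map_apply, Complex.im_sum,
      Pi.smul_apply, Complex.smul_im, ← Complex.ofReal_pow] using h2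
  obtain ⟨w, hw0, hSw⟩ : ∃ w : Fin n → ℝ, w ≠ 0 ∧ S *ᵥ w = (lam ^ 2) • w := by
    by_cases h1 : (fun i => (v i).re) = (0 : Fin n → ℝ)
    · refine ⟨fun i => (v i).im, ?_, him⟩
      intro h2
      apply hv0
      funext i
      have e1 := congrFun h1 i
      have e2 := congrFun h2 i
      exact Complex.ext e1 e2
    · exact ⟨_, h1, hre⟩
  have hlt := rayleigh_lt hS hev w hw0
  have hdot : w ⬝ᵥ (S *ᵥ w) = lam ^ 2 * (w ⬝ᵥ w) := by
    rw [hSw]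
    simp [dotProduct_smul, smul_eq_mul]
  have hpos : 0 < w ⬝ᵥ w := by
    have := dotProduct_star_self_pos_iff (v := w) |>.mpr hw0
    simpa using this
  rw [hdot] at hlt
  have hsq : lam ^ 2 < Real.pi ^ 2 := by
    by_contra hcon
    push_neg at hcon
    nlinarith
  rw [abs_lt]
  constructor <;> nlinarith [Real.pi_pos]

/-- Diagonalization of the complexified matrix exponential of a skew-symmetric matrix. -/
lemma mexp_map_eq {n : ℕ} (Ω : Matrix (Fin n) (Fin n) ℝ)
    (hA : (Complex.I • Ω.map Complex.ofReal).IsHermitian) :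
    (NormedSpace.exp Ω).map Complex.ofReal
      = (hA.eigenvectorUnitary : Matrix (Fin n) (Fin n) ℂ)
        * diagonal (fun k => Complex.exp (-Complex.I * (hA.eigenvalues k : ℂ)))
        * star (hA.eigenvectorUnitary : Matrix (Fin n) (Fin n) ℂ) := by
  classical
  set U : Matrix (Fin n) (Fin n) ℂ := (hA.eigenvectorUnitary : Matrix (Fin n) (Fin n) ℂ) with hU
  have hU1 : U * star U = 1 := (Matrix.mem_unitaryGroup_iff).mp (hA.eigenvectorUnitary).2
  have hU1' : star U * U = 1 := (Matrix.mem_unitaryGroup_iff').mp (hA.eigenvectorUnitary).2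
  have hB : Ω.map Complex.ofReal
      = U * diagonal (fun k => -Complex.I * (hA.eigenvalues k : ℂ)) * star U := by
    have hsm : (-Complex.I) • (Complex.I • Ω.map Complex.ofReal) = Ω.map Complex.ofReal := by
      rw [smul_smul]
      have : (-Complex.I) * Complex.I = 1 := by
        rw [neg_mul, Complex.I_mul_I, neg_neg]
      rw [this, one_smul]
    calc Ω.map Complex.ofReal
        = (-Complex.I) • (Complex.I • Ω.map Complex.ofReal) := hsm.symm
      _ = (-Complex.I) • (U * diagonal (RCLike.ofReal ∘ hA.eigenvalues) * star U) := by
          exact congrArg (fun M => (-Complex.I) • M) hA.spectral_theorem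
      _ = U * diagonal (fun k => -Complex.I * (hA.eigenvalues k : ℂ)) * star U := by
          rw [← Matrix.smul_mul, ← Matrix.mul_smul, ← Matrix.diagonal_smul]
          congr 1
  rw [map_exp_matrix, congrArg NormedSpace.exp hB]
  have hconj : NormedSpace.exp
      (U * diagonal (fun k => -Complex.I * (hA.eigenvalues k : ℂ)) * star U)
      = U * NormedSpace.exp (diagonal (fun k => -Complex.I * (hA.eigenvalues k : ℂ)))
        * star U :=
    Matrix.exp_units_conj ⟨U, star U, hU1, hU1'⟩ _
  have hdg : (NormedSpace.exp fun k => -Complex.I * (hA.eigenvalues k : ℂ))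
      = fun k => Complex.exp (-Complex.I * (hA.eigenvalues k : ℂ)) := by
    rw [Pi.exp_def]
    funext k
    exact (congrFun Complex.exp_eq_exp_ℂ _).symm
  rw [hconj, Matrix.exp_diagonal, hdg]

end aux

/-- the matrix exponential is injective on skew-symmetric
matrices of spectral norm less than `π`. -/
theorem mexp_injective_on_skew {n : ℕ}
    (Ω₁ Ω₂ : Matrix (Fin n) (Fin n) ℝ)
    (h₁ : Ω₁ᵀ = -Ω₁) (h₂ : Ω₂ᵀ = -Ω₂)
    (hn₁ : specNorm Ω₁ < Real.pi) (hn₂ : specNorm Ω₂ < Real.pi)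
    (h : mexp Ω₁ = mexp Ω₂) : Ω₁ = Ω₂ := by
  classical
  have hA₁ := isHermitian_I_smul h₁
  have hA₂ := isHermitian_I_smul h₂
  -- eigenvalue bounds
  have hev : ∀ (Ω : Matrix (Fin n) (Fin n) ℝ), specNorm Ω < Real.pi →
      ∀ i, (Matrix.isHermitian_conjTranspose_mul_self Ω).eigenvalues i < Real.pi ^ 2 := by
    intro Ω hn i
    have : Nonempty (Fin n) := ⟨i⟩
    have hb : Real.sqrt ((Matrix.isHermitian_conjTranspose_mul_self Ω).eigenvalues i)
        < Real.pi := by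
      have hn' : (⨆ j, Real.sqrt ((Matrix.isHermitian_conjTranspose_mul_self Ω).eigenvalues j))
          < Real.pi := hn
      exact lt_of_le_of_lt (le_ciSup
        (f := fun j => Real.sqrt ((Matrix.isHermitian_conjTranspose_mul_self Ω).eigenvalues j))
        (Set.Finite.bddAbove (Set.finite_range _)) i) hn'
    rcases le_or_gt ((Matrix.isHermitian_conjTranspose_mul_self Ω).eigenvalues i) 0 with hle | hpos
    · nlinarith [Real.pi_pos]
    · nlinarith [Real.sq_sqrt hpos.le,
        Real.sqrt_nonneg ((Matrix.isHermitian_conjTranspose_mul_self Ω).eigenvalues i)]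
  have hb₁ : ∀ k, |hA₁.eigenvalues k| < Real.pi := eig_abs_lt h₁ (hev Ω₁ hn₁) hA₁
  have hb₂ : ∀ k, |hA₂.eigenvalues k| < Real.pi := eig_abs_lt h₂ (hev Ω₂ hn₂) hA₂
  set U₁ : Matrix (Fin n) (Fin n) ℂ := (hA₁.eigenvectorUnitary : Matrix (Fin n) (Fin n) ℂ)
    with hU₁def
  set U₂ : Matrix (Fin n) (Fin n) ℂ := (hA₂.eigenvectorUnitary : Matrix (Fin n) (Fin n) ℂ)
    with hU₂def
  have hU₁ : U₁ * star U₁ = 1 := (Matrix.mem_unitaryGroup_iff).mp (hA₁.eigenvectorUnitary).2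
  have hU₁' : star U₁ * U₁ = 1 := (Matrix.mem_unitaryGroup_iff').mp (hA₁.eigenvectorUnitary).2
  have hU₂ : U₂ * star U₂ = 1 := (Matrix.mem_unitaryGroup_iff).mp (hA₂.eigenvectorUnitary).2
  have hU₂' : star U₂ * U₂ = 1 := (Matrix.mem_unitaryGroup_iff').mp (hA₂.eigenvectorUnitary).2
  set E₁ : Matrix (Fin n) (Fin n) ℂ :=
    diagonal (fun k => Complex.exp (-Complex.I * (hA₁.eigenvalues k : ℂ))) with hE₁def
  set E₂ : Matrix (Fin n) (Fin n) ℂ :=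
    diagonal (fun k => Complex.exp (-Complex.I * (hA₂.eigenvalues k : ℂ))) with hE₂def
  have hW : U₁ * E₁ * star U₁ = U₂ * E₂ * star U₂ := by
    have := congrArg (fun M => M.map Complex.ofReal) h
    simp only [mexp] at this
    rw [mexp_map_eq Ω₁ hA₁, mexp_map_eq Ω₂ hA₂] at this
    exact this
  set V : Matrix (Fin n) (Fin n) ℂ := star U₂ * U₁ with hVdef
  have hVE : V * E₁ = E₂ * V := by
    have hcong := congrArg (fun M => star U₂ * M * U₁) hW
    have hcan : ∀ X : Matrix (Fin n) (Fin n) ℂ, star U₂ * (U₂ * X) = X := fun X => by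
      rw [← Matrix.mul_assoc, hU₂', Matrix.one_mul]
    calc V * E₁ = star U₂ * (U₁ * E₁ * star U₁) * U₁ := by
          rw [hVdef]
          simp only [Matrix.mul_assoc, hU₁', Matrix.mul_one]
      _ = star U₂ * (U₂ * E₂ * star U₂) * U₁ := hcong
      _ = E₂ * V := by
          rw [hVdef]
          simp only [Matrix.mul_assoc]
          rw [hcan]
  have hent : ∀ k l, V k l * (hA₁.eigenvalues l : ℂ) = (hA₂.eigenvalues k : ℂ) * V k l := by
    intro k l
    by_cases hz : V k l = 0
    · simp [hz]
    · have he := congrFun (congrFun hVE k) l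
      rw [hE₁def, hE₂def] at he
      simp only [Matrix.mul_diagonal, Matrix.diagonal_mul] at he
      rw [mul_comm (Complex.exp _) (V k l)] at he
      have hexp := mul_left_cancel₀ hz he
      obtain ⟨m, hm⟩ := Complex.exp_eq_exp_iff_exists_int.mp hexp
      have him := congrArg Complex.im hm
      simp [Complex.mul_im, Complex.mul_re] at him
      have habs1 := abs_lt.mp (hb₁ l)
      have habs2 := abs_lt.mp (hb₂ k)
      have hm1 : |(m : ℝ)| < 1 := by
        rw [abs_lt]
        constructor <;> nlinarith [Real.pi_pos]
      have hm0 : m = 0 := by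
        have h2 : ((|m| : ℤ) : ℝ) < 1 := by rwa [Int.cast_abs]
        have h3 : |m| < 1 := by exact_mod_cast h2
        have h4 := abs_lt.mp h3
        omega
      rw [hm0] at him
      have heq : hA₁.eigenvalues l = hA₂.eigenvalues k := by
        push_cast at him
        linarith
      rw [heq, mul_comm]
  have hD : V * diagonal (fun l => (hA₁.eigenvalues l : ℂ))
      = diagonal (fun k => (hA₂.eigenvalues k : ℂ)) * V := by
    ext k l
    simp only [Matrix.mul_diagonal, Matrix.diagonal_mul]
    exact hent k l
  have hUV : U₂ * V = U₁ := by
    rw [hVdef, ← Matrix.mul_assoc, hU₂, Matrix.one_mul]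
  have hVU : V * star U₁ = star U₂ := by
    rw [hVdef, Matrix.mul_assoc, hU₁, Matrix.mul_one]
  have hsd₁ : Complex.I • Ω₁.map Complex.ofReal
      = U₁ * diagonal (fun l => (hA₁.eigenvalues l : ℂ)) * star U₁ := hA₁.spectral_theorem
  have hsd₂ : Complex.I • Ω₂.map Complex.ofReal
      = U₂ * diagonal (fun k => (hA₂.eigenvalues k : ℂ)) * star U₂ := hA₂.spectral_theorem
  have hAeq : Complex.I • Ω₁.map Complex.ofReal = Complex.I • Ω₂.map Complex.ofReal := by
    rw [hsd₁, hsd₂]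
    calc U₁ * diagonal (fun l => (hA₁.eigenvalues l : ℂ)) * star U₁
        = (U₂ * V) * diagonal (fun l => (hA₁.eigenvalues l : ℂ)) * star U₁ := by rw [hUV]
      _ = U₂ * (V * diagonal (fun l => (hA₁.eigenvalues l : ℂ))) * star U₁ := by
          rw [Matrix.mul_assoc U₂ V _]
      _ = U₂ * (diagonal (fun k => (hA₂.eigenvalues k : ℂ)) * V) * star U₁ := by rw [hD]
      _ = U₂ * diagonal (fun k => (hA₂.eigenvalues k : ℂ)) * (V * star U₁) := by
          simp only [Matrix.mul_assoc]
      _ = U₂ * diagonal (fun k => (hA₂.eigenvalues k : ℂ)) * star U₂ := by rw [hVU]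
  have hmapeq : Ω₁.map Complex.ofReal = Ω₂.map Complex.ofReal := by
    have hc := congrArg (fun M => (-Complex.I) • M) hAeq
    simpa [smul_smul, neg_mul, Complex.I_mul_I, neg_neg, one_smul] using hc
  ext i j
  have hij := congrFun (congrFun hmapeq i) j
  simpa [Matrix.map_apply] using hij
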